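/- Let R be an integral domain with quotient field K and let U be a finite subset of K. Then R[U] is the Kaplansky transform of some ideal of R if and only if R[U] = Ω(R :_R U). -/

import Mathlib

noncomputable section

/-- The image of `A` in `L` under the algebra map, as a set. -/
def imageR (A L : Type*) [CommRing A] [CommRing L] [Algebra A L] : Set L :=
  Set.range (algebraMap A L)

/-- The Kaplansky transform of an ideal `I` of `A`, computed inside `L`. -/
def omegaSet (A L : Type*) [CommRing A] [CommRing L] [Algebra A L] (I : Ideal A) : Set L :=
  {x : L | ∀ a ∈ I, ∃ n : ℕ, 1 ≤ n ∧ ∃ r : A, (algebraMap A L a) ^ n * x = algebraMap A L r}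

/-- The localization of `A` at the prime `P`, viewed as a subset of `L`. -/
def locSet (A L : Type*) [CommRing A] [CommRing L] [Algebra A L] (P : Ideal A) : Set L :=
  {x : L | ∃ s : A, s ∉ P ∧ ∃ r : A, x * algebraMap A L s = algebraMap A L r}

/-- The conductor ideal `(A :_A U) = {r : A | r • U ⊆ A}`. -/
def condIdeal (A L : Type*) [CommRing A] [CommRing L] [Algebra A L] (U : Set L) : Ideal A where
  carrier := {r : A | ∀ u ∈ U, ∃ r' : A, algebraMap A L r * u = algebraMap A L r'}
  zero_mem' := fun u _ => ⟨0, by simp⟩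
  add_mem' := by
    rintro a b ha hb u hu
    obtain ⟨a', ha'⟩ := ha u hu
    obtain ⟨b', hb'⟩ := hb u hu
    exact ⟨a' + b', by rw [map_add, map_add, add_mul, ha', hb']⟩
  smul_mem' := by
    rintro c r h u hu
    obtain ⟨r', hr'⟩ := h u hu
    exact ⟨c * r', by rw [smul_eq_mul, map_mul, map_mul, mul_assoc, hr']⟩

/-- A domain is an sQQR-domain if every simple overring `R[u]`, `u` in the quotient field,
is an intersection of localizations of `R` at primes. -/
def IsSQQR (A : Type*) [CommRing A] [IsDomain A] : Prop :=
  ∀ u : FractionRing A, ∃ Ps : Set (Ideal A), (∀ P ∈ Ps, P.IsPrime) ∧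
    (↑(Algebra.adjoin A {u} : Subalgebra A (FractionRing A)) : Set (FractionRing A)) =
      ⋂ P ∈ Ps, locSet A (FractionRing A) P

/-- A Prüfer domain: every localization at a prime is a valuation domain. -/
def IsPrufer (A : Type*) [CommRing A] [IsDomain A] : Prop :=
  ∀ (P : Ideal A) (hP : P.IsPrime),
    haveI := hP
    letI : IsDomain (Localization.AtPrime P) := IsLocalization.isDomain_of_local_atPrime hP
    ValuationRing (Localization.AtPrime P)


theorem stmt4 (R : Type*) [CommRing R] [IsDomain R] (K : Type*) [Field K] [Algebra R K]
    [IsFractionRing R K] (U : Set K) (hU : U.Finite) :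
    (∃ I : Ideal R, (↑(Algebra.adjoin R U) : Set K) = omegaSet R K I) ↔
      (↑(Algebra.adjoin R U) : Set K) = omegaSet R K (condIdeal R K U) := by
  set φ := algebraMap R K with hφ
  constructor
  · rintro ⟨I, hI⟩
    apply Set.Subset.antisymm
    · -- adjoin ⊆ Ω(condIdeal)
      intro x hx
      intro a ha
      have ha' : ∀ u ∈ U, ∃ r' : R, φ a * u = φ r' := ha
      have hx' : x ∈ Algebra.adjoin R U := hx
      clear hx
      have key : ∃ (n : ℕ) (r : R), φ a ^ n * x = φ r := by
        induction hx' using Algebra.adjoin_induction with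
        | mem u hu =>
            obtain ⟨r', hr'⟩ := ha' u hu
            exact ⟨1, r', by simpa using hr'⟩
        | algebraMap r => exact ⟨0, r, by simp; rfl⟩
        | add x y hx hy ihx ihy =>
            obtain ⟨n1, r1, h1⟩ := ihx
            obtain ⟨n2, r2, h2⟩ := ihy
            refine ⟨n1 + n2, a ^ n2 * r1 + a ^ n1 * r2, ?_⟩
            calc φ a ^ (n1 + n2) * (x + y)
                = φ a ^ n2 * (φ a ^ n1 * x) + φ a ^ n1 * (φ a ^ n2 * y) := by ring
              _ = φ a ^ n2 * φ r1 + φ a ^ n1 * φ r2 := by rw [h1, h2]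
              _ = φ (a ^ n2 * r1 + a ^ n1 * r2) := by
                  rw [map_add, map_mul, map_mul, map_pow, map_pow]
        | mul x y hx hy ihx ihy =>
            obtain ⟨n1, r1, h1⟩ := ihx
            obtain ⟨n2, r2, h2⟩ := ihy
            refine ⟨n1 + n2, r1 * r2, ?_⟩
            calc φ a ^ (n1 + n2) * (x * y)
                = (φ a ^ n1 * x) * (φ a ^ n2 * y) := by ring
              _ = φ r1 * φ r2 := by rw [h1, h2]
              _ = φ (r1 * r2) := (map_mul φ r1 r2).symm
      obtain ⟨n, r, h⟩ := key
      refine ⟨n + 1, Nat.le_add_left 1 n, a * r, ?_⟩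
      calc φ a ^ (n + 1) * x = φ a * (φ a ^ n * x) := by ring
        _ = φ a * φ r := by rw [h]
        _ = φ (a * r) := (map_mul φ a r).symm
    · -- Ω(condIdeal) ⊆ Ω(I) = adjoin
      intro x hx
      rw [hI]
      intro a ha
      have hall : ∀ u ∈ U, ∃ (n : ℕ) (r : R), φ a ^ n * u = φ r := by
        intro u hu
        have hu' : u ∈ omegaSet R K I := by
          rw [← hI]; exact Algebra.subset_adjoin hu
        obtain ⟨n, _, r, hr⟩ := hu' a ha
        exact ⟨n, r, hr⟩
      have key : ∀ V : Set K, V.Finite →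
          (∀ u ∈ V, ∃ (n : ℕ) (r : R), φ a ^ n * u = φ r) →
          ∃ m : ℕ, ∀ u ∈ V, ∃ r : R, φ a ^ m * u = φ r := by
        intro V hV
        refine Set.Finite.induction_on (motive := fun V _ => (∀ u ∈ V, ∃ (n : ℕ) (r : R), φ a ^ n * u = φ r) → ∃ m : ℕ, ∀ u ∈ V, ∃ r : R, φ a ^ m * u = φ r) V hV (fun _ => ⟨0, by simp⟩) ?_
        intro v V' hvs hsfin ih hall'
        obtain ⟨m, hm⟩ := ih fun u hu => hall' u (Set.mem_insert_of_mem _ hu)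
        obtain ⟨n, r0, h0⟩ := hall' v (Set.mem_insert _ _)
        refine ⟨m + n, ?_⟩
        rintro u hu
        rcases hu with rfl | hu
        · refine ⟨a ^ m * r0, ?_⟩
          calc φ a ^ (m + n) * u = φ a ^ m * (φ a ^ n * u) := by ring
            _ = φ a ^ m * φ r0 := by rw [h0]
            _ = φ (a ^ m * r0) := by rw [map_mul, map_pow]
        · obtain ⟨r1, h1⟩ := hm u hu
          refine ⟨a ^ n * r1, ?_⟩
          calc φ a ^ (m + n) * u = φ a ^ n * (φ a ^ m * u) := by ring
            _ = φ a ^ n * φ r1 := by rw [h1]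
            _ = φ (a ^ n * r1) := by rw [map_mul, map_pow]
      obtain ⟨m, hm⟩ := key U hU hall
      have hC : a ^ (m + 1) ∈ condIdeal R K U := by
        show ∀ u ∈ U, ∃ r' : R, φ (a ^ (m + 1)) * u = φ r'
        intro u hu
        obtain ⟨r, hr⟩ := hm u hu
        refine ⟨a * r, ?_⟩
        calc φ (a ^ (m + 1)) * u = φ a * (φ a ^ m * u) := by rw [map_pow]; ring
          _ = φ a * φ r := by rw [hr]
          _ = φ (a * r) := (map_mul φ a r).symm
      obtain ⟨k, hk, r, hr⟩ := hx (a ^ (m + 1)) hC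
      refine ⟨(m + 1) * k, ?_, r, ?_⟩
      · exact Nat.one_le_iff_ne_zero.mpr (Nat.mul_ne_zero (Nat.succ_ne_zero m) (by omega))
      · rw [pow_mul, ← map_pow]; exact hr
  · intro h
    exact ⟨condIdeal R K U, h⟩

end
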